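/- The largest eigenvalue λ_max of Ψ has a one-dimensional eigenspace, and every eigenvector v of Ψ for λ_max has all entries nonzero of the same sign (i.e., either v_i > 0 for all i, or v_i < 0 for all i). Likewise, the smallest eigenvalue λ_min of Ψ has a one-dimensional eigenspace, and every eigenvector v of Ψ for λ_min has all entries nonzero with alternating signs (i.e., either (−1)^i v_i > 0 for all i, or (−1)^i v_i < 0 for all i). -/

import Mathlib

open Matrix

lemma mem_spectrum_iff_eig {n : ℕ} (A : Matrix (Fin n) (Fin n) ℝ) (μ : ℝ) :
    μ ∈ spectrum ℝ A ↔ ∃ v : Fin n → ℝ, v ≠ 0 ∧ A *ᵥ v = μ • v := by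
  have h : μ ∈ spectrum ℝ A ↔ Module.End.HasEigenvalue (Matrix.toLin' A) μ := by
    rw [← AlgEquiv.spectrum_eq (Matrix.toLinAlgEquiv' (R := ℝ) (n := Fin n)) A,
      Module.End.hasEigenvalue_iff_mem_spectrum]
    rfl
  rw [h]
  constructor
  · intro h'
    obtain ⟨v, hv⟩ := h'.exists_hasEigenvector
    exact ⟨v, hv.2, by simpa [Matrix.toLin'_apply] using hv.apply_eq_smul⟩
  · rintro ⟨v, hv0, hv⟩
    exact Module.End.hasEigenvalue_of_hasEigenvector
      ⟨Module.End.mem_eigenspace_iff.2 (by simpa [Matrix.toLin'_apply] using hv), hv0⟩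

lemma herm_key {n : ℕ} {A : Matrix (Fin n) (Fin n) ℝ} (hA : A.IsHermitian) :
    ∃ w : Fin n → (Fin n → ℝ), ∃ eig : Fin n → ℝ,
      (∀ i, A *ᵥ w i = eig i • w i) ∧
      (∀ i j, w i ⬝ᵥ w j = if i = j then 1 else 0) ∧
      (∀ v : Fin n → ℝ, ∑ i, (w i ⬝ᵥ v) • w i = v) ∧
      (∀ i, eig i ∈ spectrum ℝ A) := by
  classical
  refine ⟨fun i => ⇑(hA.eigenvectorBasis i), hA.eigenvalues,
    hA.mulVec_eigenvectorBasis, ?_, ?_, hA.eigenvalues_mem_spectrum_real⟩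
  · intro i j
    have h1 := orthonormal_iff_ite.1 hA.eigenvectorBasis.orthonormal i j
    have h2 : (inner ℝ (hA.eigenvectorBasis i) (hA.eigenvectorBasis j) : ℝ)
        = ⇑(hA.eigenvectorBasis i) ⬝ᵥ ⇑(hA.eigenvectorBasis j) := by
      simp [PiLp.inner_apply, dotProduct, mul_comm]
    rw [← h2, h1]
  · intro v
    have h := hA.eigenvectorBasis.sum_repr (WithLp.toLp 2 v)
    have h' : ∀ i, hA.eigenvectorBasis.repr (WithLp.toLp 2 v) i
        = ⇑(hA.eigenvectorBasis i) ⬝ᵥ v := by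
      intro i
      rw [hA.eigenvectorBasis.repr_apply_apply]
      simp [PiLp.inner_apply, dotProduct, mul_comm]
    calc ∑ i, (⇑(hA.eigenvectorBasis i) ⬝ᵥ v) • ⇑(hA.eigenvectorBasis i)
        = ∑ i, hA.eigenvectorBasis.repr (WithLp.toLp 2 v) i
            • ⇑(hA.eigenvectorBasis i) := by simp_rw [h']
      _ = v := by simpa using congrArg WithLp.ofLp h

lemma dot_sum_smul {n : ℕ} (v : Fin n → ℝ) (d : Fin n → ℝ) (w : Fin n → (Fin n → ℝ)) :
    v ⬝ᵥ (∑ i, d i • w i) = ∑ i, d i * (w i ⬝ᵥ v) := by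
  simp only [dotProduct, Finset.sum_apply, Pi.smul_apply, smul_eq_mul, Finset.mul_sum]
  rw [Finset.sum_comm]
  exact Finset.sum_congr rfl fun i _ => Finset.sum_congr rfl fun k _ => by ring

lemma mulVec_sum_smul {n : ℕ} (A : Matrix (Fin n) (Fin n) ℝ) (d : Fin n → ℝ)
    (w : Fin n → (Fin n → ℝ)) :
    A *ᵥ (∑ i, d i • w i) = ∑ i, d i • (A *ᵥ w i) := by
  have h := map_sum A.mulVecLin (fun i => d i • w i) Finset.univ
  simpa only [_root_.map_smul, Matrix.mulVecLin_apply] using h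

lemma rayleigh_max {n : ℕ} {A : Matrix (Fin n) (Fin n) ℝ} (hA : A.IsHermitian)
    {μ : ℝ} (hμ : ∀ μ' ∈ spectrum ℝ A, μ' ≤ μ)
    (v : Fin n → ℝ) (h : μ * (v ⬝ᵥ v) ≤ v ⬝ᵥ (A *ᵥ v)) :
    A *ᵥ v = μ • v := by
  classical
  obtain ⟨w, eig, hw, horth, hrepr, hmem⟩ := herm_key hA
  set c : Fin n → ℝ := fun i => w i ⬝ᵥ v with hc
  have hv : v = ∑ i, c i • w i := (hrepr v).symm
  have hAv : A *ᵥ v = ∑ i, (eig i * c i) • w i := by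
    conv_lhs => rw [hv]
    rw [mulVec_sum_smul]
    exact Finset.sum_congr rfl fun i _ => by rw [hw i, smul_smul, mul_comm]
  have hdotv : v ⬝ᵥ v = ∑ i, c i * c i := by
    have h2 := dot_sum_smul v c w
    rw [← hv] at h2
    exact h2
  have hdotAv : v ⬝ᵥ (A *ᵥ v) = ∑ i, (eig i * c i) * c i := by
    have h2 := dot_sum_smul v (fun i => eig i * c i) w
    rw [← hAv] at h2
    exact h2
  have hsum : ∑ i, (μ - eig i) * (c i * c i) = μ * (v ⬝ᵥ v) - v ⬝ᵥ (A *ᵥ v) := by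
    rw [hdotv, hdotAv, Finset.mul_sum, ← Finset.sum_sub_distrib]
    exact Finset.sum_congr rfl fun i _ => by ring
  have hterm : ∀ i ∈ Finset.univ, (0:ℝ) ≤ (μ - eig i) * (c i * c i) :=
    fun i _ => mul_nonneg (sub_nonneg.2 (hμ _ (hmem i))) (mul_self_nonneg _)
  have hzero : ∀ i ∈ Finset.univ, (μ - eig i) * (c i * c i) = 0 := by
    rw [← Finset.sum_eq_zero_iff_of_nonneg hterm]
    exact le_antisymm (by rw [hsum]; linarith) (Finset.sum_nonneg hterm)
  have heq : ∀ i, eig i * c i = μ * c i := by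
    intro i
    rcases mul_eq_zero.1 (hzero i (Finset.mem_univ i)) with h1 | h1
    · rw [sub_eq_zero] at h1; rw [h1]
    · rcases mul_self_eq_zero.1 h1 with h2
      rw [h2, mul_zero, mul_zero]
  rw [hAv]
  conv_rhs => rw [hv]
  rw [Finset.smul_sum]
  exact Finset.sum_congr rfl fun i _ => by rw [heq i, smul_smul]

lemma spectrum_sub_range {n : ℕ} {A : Matrix (Fin n) (Fin n) ℝ} (hA : A.IsHermitian) :
    ∃ eig : Fin n → ℝ, spectrum ℝ A = Set.range eig := by
  classical
  obtain ⟨w, eig, hw, horth, hrepr, hmem⟩ := herm_key hA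
  refine ⟨eig, Set.eq_of_subset_of_subset ?_ ?_⟩
  · intro μ hμ
    obtain ⟨v, hv0, hv⟩ := (mem_spectrum_iff_eig A μ).1 hμ
    have hex : ∃ i, w i ⬝ᵥ v ≠ 0 := by
      by_contra hno
      push_neg at hno
      apply hv0
      rw [← hrepr v]
      exact Finset.sum_eq_zero fun i _ => by rw [hno i, zero_smul]
    obtain ⟨i, hi⟩ := hex
    refine ⟨i, ?_⟩
    have hsymT : Aᵀ = A := by
      ext a b
      rw [Matrix.transpose_apply, ← hA.apply a b, star_trivial]
    have h1 : w i ⬝ᵥ (A *ᵥ v) = μ * (w i ⬝ᵥ v) := by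
      rw [hv, dotProduct_smul, smul_eq_mul]
    have h2 : w i ⬝ᵥ (A *ᵥ v) = eig i * (w i ⬝ᵥ v) := by
      rw [Matrix.dotProduct_mulVec, show w i ᵥ* A = A *ᵥ w i from by
          rw [← hsymT, Matrix.vecMul_transpose, hsymT],
        hw i, smul_dotProduct, smul_eq_mul]
    exact mul_right_cancel₀ hi (h2.symm.trans h1)
  · rintro _ ⟨i, rfl⟩
    exact hmem i

lemma perron {n : ℕ} (hn : 0 < n) (A : Matrix (Fin n) (Fin n) ℝ)
    (hA : A.IsHermitian) (hApos : ∀ i j, 0 < A i j) :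
    (∃ v : Fin n → ℝ, v ≠ 0 ∧ A.mulVec v = sSup (spectrum ℝ A) • v) ∧
    ∀ v : Fin n → ℝ, v ≠ 0 → A.mulVec v = sSup (spectrum ℝ A) • v →
      ((∀ i, 0 < v i) ∨ (∀ i, v i < 0)) ∧
      ∀ w : Fin n → ℝ, A.mulVec w = sSup (spectrum ℝ A) • w → ∃ c : ℝ, w = c • v := by
  classical
  obtain ⟨eig, hspec⟩ := spectrum_sub_range hA
  have hfin : (spectrum ℝ A).Finite := hspec ▸ Set.finite_range eig
  have hne : (spectrum ℝ A).Nonempty := hspec ▸ ⟨eig ⟨0, hn⟩, ⟨⟨0, hn⟩, rfl⟩⟩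
  set μ := sSup (spectrum ℝ A) with hμdef
  have hμmem : μ ∈ spectrum ℝ A := hne.csSup_mem hfin
  have hub : ∀ μ' ∈ spectrum ℝ A, μ' ≤ μ := fun _ h => le_csSup hfin.bddAbove h
  -- the key sign lemma
  have hsign : ∀ v : Fin n → ℝ, v ≠ 0 → A.mulVec v = μ • v →
      (∀ i, 0 < v i) ∨ (∀ i, v i < 0) := by
    intro v hv0 hv
    set u : Fin n → ℝ := fun i => |v i| with hu
    obtain ⟨i1, hi1⟩ := Function.ne_iff.1 hv0
    rw [Pi.zero_apply] at hi1
    have hui1 : 0 < u i1 := abs_pos.2 hi1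
    have huu : u ⬝ᵥ u = v ⬝ᵥ v := by
      refine Finset.sum_congr rfl fun i _ => ?_
      simp [hu, abs_mul_abs_self]
    have hvAv : v ⬝ᵥ (A *ᵥ v) = μ * (v ⬝ᵥ v) := by
      rw [hv, dotProduct_smul, smul_eq_mul]
    have hQle : v ⬝ᵥ (A *ᵥ v) ≤ u ⬝ᵥ (A *ᵥ u) := by
      simp only [dotProduct, Matrix.mulVec, Finset.mul_sum]
      refine Finset.sum_le_sum fun i _ => Finset.sum_le_sum fun j _ => ?_
      have : v i * (A i j * v j) ≤ |v i * (A i j * v j)| := le_abs_self _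
      calc v i * (A i j * v j) ≤ |v i| * (A i j * |v j|) := by
            refine le_trans (le_abs_self _) (le_of_eq ?_)
            rw [abs_mul, abs_mul, abs_of_pos (hApos i j)]
          _ = u i * (A i j * u j) := rfl
    have hueig : A *ᵥ u = μ • u := by
      refine rayleigh_max hA hub u ?_
      rw [huu, ← hvAv]
      exact hQle
    -- positivity of μ and of u
    have husum : ∀ i, (A *ᵥ u) i = ∑ j, A i j * u j := fun i => rfl
    have hunn : ∀ j, 0 ≤ u j := fun j => abs_nonneg _
    have hsum_pos : ∀ i, 0 < ∑ j, A i j * u j := by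
      intro i
      refine lt_of_lt_of_le (mul_pos (hApos i i1) hui1) ?_
      refine Finset.single_le_sum (f := fun j => A i j * u j) ?_ (Finset.mem_univ i1)
      exact fun j _ => mul_nonneg (hApos i j).le (hunn j)
    have hμpos : 0 < μ := by
      have h1 : μ * u i1 = ∑ j, A i1 j * u j := by
        rw [← husum i1, hueig]; rfl
      nlinarith [hsum_pos i1, hui1]
    have hupos : ∀ i, 0 < u i := by
      intro i
      have h1 : μ * u i = ∑ j, A i j * u j := by rw [← husum i, hueig]; rfl
      nlinarith [hsum_pos i, hμpos]
    -- equality of quadratic forms forces same signs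
    have hQeq : u ⬝ᵥ (A *ᵥ u) = v ⬝ᵥ (A *ᵥ v) := by
      rw [hueig, dotProduct_smul, smul_eq_mul, huu, hvAv]
    have hterms : ∀ i ∈ Finset.univ, ∀ j ∈ Finset.univ,
        A i j * (u i * u j - v i * v j) = 0 := by
      have hnn : ∀ i ∈ (Finset.univ : Finset (Fin n)),
          0 ≤ ∑ j, A i j * (u i * u j - v i * v j) := by
        intro i _
        refine Finset.sum_nonneg fun j _ => mul_nonneg (hApos i j).le ?_
        have : v i * v j ≤ |v i * v j| := le_abs_self _
        rw [abs_mul] at this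
        linarith [this]
      have hzero : ∑ i, ∑ j, A i j * (u i * u j - v i * v j) = 0 := by
        have hexp : ∑ i, ∑ j, A i j * (u i * u j - v i * v j)
            = u ⬝ᵥ (A *ᵥ u) - v ⬝ᵥ (A *ᵥ v) := by
          simp only [dotProduct, Matrix.mulVec, Finset.mul_sum]
          rw [← Finset.sum_sub_distrib]
          refine Finset.sum_congr rfl fun i _ => ?_
          rw [← Finset.sum_sub_distrib]
          exact Finset.sum_congr rfl fun j _ => by ring
        rw [hexp, hQeq, sub_self]
      have houter := (Finset.sum_eq_zero_iff_of_nonneg hnn).1 hzero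
      intro i hi j hj
      refine (Finset.sum_eq_zero_iff_of_nonneg ?_).1 (houter i hi) j hj
      intro j _
      refine mul_nonneg (hApos i j).le ?_
      have : v i * v j ≤ |v i * v j| := le_abs_self _
      rw [abs_mul] at this
      linarith [this]
    have hprod : ∀ i, 0 < v i * v i1 := by
      intro i
      have h0 := hterms i (Finset.mem_univ i) i1 (Finset.mem_univ i1)
      have h1 : u i * u i1 - v i * v i1 = 0 :=
        (mul_eq_zero.1 h0).resolve_left (ne_of_gt (hApos i i1))
      have h2 : v i * v i1 = u i * u i1 := by linarith
      rw [h2]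
      exact mul_pos (hupos i) (hupos i1)
    rcases lt_or_gt_of_ne hi1 with hneg | hpos
    · right
      intro i
      rcases mul_pos_iff.1 (hprod i) with ⟨h1, h2⟩ | ⟨h1, h2⟩
      · exact absurd h2 (not_lt.2 hneg.le)
      · exact h1
    · left
      intro i
      rcases mul_pos_iff.1 (hprod i) with ⟨h1, h2⟩ | ⟨h1, h2⟩
      · exact h1
      · exact absurd h2 (not_lt.2 hpos.le)
  constructor
  · obtain ⟨v, hv0, hv⟩ := (mem_spectrum_iff_eig A μ).1 hμmem
    exact ⟨v, hv0, hv⟩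
  · intro v hv0 hv
    refine ⟨hsign v hv0 hv, ?_⟩
    intro w hw
    by_cases hw0 : w = 0
    · exact ⟨0, by rw [hw0, zero_smul]⟩
    · set i0 : Fin n := ⟨0, hn⟩
      have hv0' : v i0 ≠ 0 := by
        rcases hsign v hv0 hv with h | h
        · exact (h i0).ne'
        · exact (h i0).ne
      set d : ℝ := w i0 / v i0 with hd
      set z : Fin n → ℝ := w - d • v with hz
      have hzeig : A.mulVec z = μ • z := by
        rw [hz, Matrix.mulVec_sub, hw, Matrix.mulVec_smul, hv]
        ext i
        simp [smul_sub]
        ring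
      by_cases hz0 : z = 0
      · refine ⟨d, ?_⟩
        have := sub_eq_zero.1 (by rw [← hz, hz0] : w - d • v = 0)
        exact this
      · exfalso
        have hzi0 : z i0 = 0 := by
          rw [hz]
          simp [hd]
          field_simp
          ring
        rcases hsign z hz0 hzeig with h | h
        · exact (h i0).ne' hzi0
        · exact (h i0).ne hzi0
open Matrix Polynomial

lemma cauchyDet_ne_zero {m : ℕ} (x y : Fin m → ℝ)
    (hxy : ∀ i j, x i + y j ≠ 0) (hx : Function.Injective x) (hy : Function.Injective y) :
    (Matrix.of fun i j => 1 / (x i + y j)).det ≠ 0 := by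
  classical
  rcases Nat.eq_zero_or_pos m with hm | hm
  · subst hm
    simp [Matrix.det_fin_zero]
  intro hdet
  obtain ⟨c, hc0, hc⟩ := Matrix.exists_mulVec_eq_zero_iff.2 hdet
  have hsum : ∀ i, ∑ j, c j / (x i + y j) = 0 := by
    intro i
    have h := congrFun hc i
    simp only [Matrix.mulVec, dotProduct, Matrix.of_apply, Pi.zero_apply] at h
    rw [← h]
    exact Finset.sum_congr rfl fun j _ => by rw [one_div, div_eq_mul_inv, mul_comm]
  set P : ℝ[X] := ∑ j, Polynomial.C (c j) * ∏ k ∈ Finset.univ.erase j, (X + Polynomial.C (y k))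
    with hP
  have hPdeg : P.natDegree < m := by
    refine lt_of_le_of_lt (Polynomial.natDegree_sum_le_of_forall_le _ _ fun j _ => ?_)
      (Nat.sub_lt hm one_pos)
    refine le_trans (Polynomial.natDegree_mul_le) ?_
    rw [Polynomial.natDegree_C, zero_add]
    refine le_trans (Polynomial.natDegree_prod_le _ _) ?_
    rw [Finset.sum_congr rfl fun k _ => Polynomial.natDegree_X_add_C (y k)]
    simp [Finset.card_erase_of_mem]
  have hPeval : ∀ i, P.eval (x i) = 0 := by
    intro i
    have hfull : ∀ j : Fin m, (x i + y j) * ∏ k ∈ Finset.univ.erase j, (x i + y k)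
        = ∏ k, (x i + y k) := fun j => Finset.mul_prod_erase Finset.univ (fun k => x i + y k) (Finset.mem_univ j)
    have : P.eval (x i) = ∑ j, c j * ∏ k ∈ Finset.univ.erase j, (x i + y k) := by
      rw [hP]
      simp [Polynomial.eval_finset_sum, Polynomial.eval_prod]
    rw [this]
    have h2 : ∀ j : Fin m, c j * ∏ k ∈ Finset.univ.erase j, (x i + y k)
        = (∏ k, (x i + y k)) * (c j / (x i + y j)) := by
      intro j
      rw [← hfull j, mul_comm (x i + y j), mul_assoc,
        mul_div_cancel₀ _ (hxy i j), mul_comm]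
    rw [Finset.sum_congr rfl fun j _ => h2 j, ← Finset.mul_sum, hsum i, mul_zero]
  have hP0 : P = 0 :=
    Polynomial.eq_zero_of_natDegree_lt_card_of_eval_eq_zero P hx hPeval
      (by simpa using hPdeg)
  apply hc0
  funext j
  have hev : P.eval (-(y j)) = c j * ∏ k ∈ Finset.univ.erase j, (y k - y j) := by
    rw [hP]
    simp only [Polynomial.eval_finset_sum, Polynomial.eval_mul, Polynomial.eval_C,
      Polynomial.eval_prod, Polynomial.eval_add, Polynomial.eval_X]
    rw [Finset.sum_eq_single j]
    · congr 1
      exact Finset.prod_congr rfl fun k _ => by ring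
    · intro r _ hrj
      have hjr : j ∈ Finset.univ.erase r := Finset.mem_erase.2 ⟨(Ne.symm hrj), Finset.mem_univ j⟩
      rw [Finset.prod_eq_zero hjr (by ring), mul_zero]
    · intro h
      exact absurd (Finset.mem_univ j) h
  have hprodne : ∏ k ∈ Finset.univ.erase j, (y k - y j) ≠ 0 := by
    refine Finset.prod_ne_zero_iff.2 fun k hk => ?_
    have : k ≠ j := (Finset.mem_erase.1 hk).1
    exact sub_ne_zero.2 fun h => this (hy h)
  have : c j * ∏ k ∈ Finset.univ.erase j, (y k - y j) = 0 := by
    rw [← hev, hP0, Polynomial.eval_zero]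
  exact (mul_eq_zero.1 this).resolve_right hprodne

open MeasureTheory in
lemma one_div_eq_integral_exp {a : ℝ} (ha : 0 < a) :
    1 / a = ∫ t in Set.Ioi (0:ℝ), Real.exp (-(a * t)) := by
  have h := MeasureTheory.integral_comp_mul_left_Ioi (fun u => Real.exp (-u)) 0 ha
  rw [mul_zero] at h
  rw [show (fun t => Real.exp (-(a * t))) = fun t => Real.exp (-(a * t)) from rfl]
  rw [h, integral_exp_neg_Ioi, neg_zero, Real.exp_zero, smul_eq_mul, mul_one, one_div]

open MeasureTheory in
lemma integrable_exp_pair {a b : ℝ} (ha : 0 < a) (hb : 0 < b) :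
    IntegrableOn (fun t : ℝ => Real.exp (-(a * t)) * Real.exp (-(b * t))) (Set.Ioi 0) := by
  have h := exp_neg_integrableOn_Ioi 0 (add_pos ha hb)
  exact h.congr_fun (fun t _ => by rw [← Real.exp_add]; congr 1; ring) measurableSet_Ioi

open MeasureTheory in
lemma cauchy_quadform_nonneg {m : ℕ} (x : Fin m → ℝ) (hx : ∀ i, 0 < x i) (c : Fin m → ℝ) :
    0 ≤ ∑ i, ∑ j, c i * c j * (1 / (x i + x j)) := by
  have hint : ∀ i j : Fin m, IntegrableOn
      (fun t : ℝ => c i * c j * (Real.exp (-(x i * t)) * Real.exp (-(x j * t)))) (Set.Ioi 0) :=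
    fun i j => (integrable_exp_pair (hx i) (hx j)).const_mul _
  have hstep : ∀ i j : Fin m, c i * c j * (1 / (x i + x j))
      = ∫ t in Set.Ioi (0:ℝ), c i * c j * (Real.exp (-(x i * t)) * Real.exp (-(x j * t))) := by
    intro i j
    rw [MeasureTheory.integral_const_mul]
    congr 1
    rw [one_div_eq_integral_exp (add_pos (hx i) (hx j))]
    refine MeasureTheory.setIntegral_congr_fun measurableSet_Ioi fun t _ => ?_
    rw [← Real.exp_add]
    ring_nf
  calc (0:ℝ) ≤ ∫ t in Set.Ioi (0:ℝ), (∑ i, c i * Real.exp (-(x i * t)))^2 := by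
        refine MeasureTheory.setIntegral_nonneg measurableSet_Ioi fun t _ => sq_nonneg _
    _ = ∫ t in Set.Ioi (0:ℝ), ∑ i, ∑ j,
          c i * c j * (Real.exp (-(x i * t)) * Real.exp (-(x j * t))) := by
        refine MeasureTheory.setIntegral_congr_fun measurableSet_Ioi fun t _ => ?_
        rw [sq, Finset.sum_mul_sum]
        exact Finset.sum_congr rfl fun i _ => Finset.sum_congr rfl fun j _ => by ring
    _ = ∑ i, ∑ j, ∫ t in Set.Ioi (0:ℝ),
          c i * c j * (Real.exp (-(x i * t)) * Real.exp (-(x j * t))) := by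
        rw [MeasureTheory.integral_finset_sum _ fun i _ => integrable_finset_sum _
          fun j _ => hint i j]
        exact Finset.sum_congr rfl fun i _ =>
          MeasureTheory.integral_finset_sum _ fun j _ => hint i j
    _ = ∑ i, ∑ j, c i * c j * (1 / (x i + x j)) := by
        exact Finset.sum_congr rfl fun i _ => Finset.sum_congr rfl fun j _ => (hstep i j).symm

lemma cauchy_symm_posSemidef {m : ℕ} (x : Fin m → ℝ) (hx : ∀ i, 0 < x i) :
    (Matrix.of fun i j : Fin m => 1 / (x i + x j)).PosSemidef := by
  refine Matrix.posSemidef_iff_dotProduct_mulVec.2 ⟨?_, ?_⟩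
  · ext i j
    simp only [Matrix.conjTranspose_apply, Matrix.of_apply, star_trivial]
    rw [add_comm]
  · intro v
    have h0 := cauchy_quadform_nonneg x hx v
    have h1 : star v ⬝ᵥ ((Matrix.of fun i j : Fin m => 1 / (x i + x j)) *ᵥ v)
        = ∑ i, ∑ j, v i * v j * (1 / (x i + x j)) := by
      simp only [star_trivial, dotProduct, Matrix.mulVec, Matrix.of_apply, Finset.mul_sum]
      exact Finset.sum_congr rfl fun i _ => Finset.sum_congr rfl fun j _ => by ring
    rw [h1]
    exact h0

lemma cauchyDet_pos {m : ℕ} (x y : Fin m → ℝ) (hx : ∀ i, 0 < x i) (hy : ∀ i, 0 < y i)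
    (hxm : StrictMono x) (hym : StrictMono y) :
    0 < (Matrix.of fun i j : Fin m => 1 / (x i + y j)).det := by
  classical
  set z : ℝ → Fin m → ℝ := fun t j => (1 - t) * y j + t * x j with hz
  have hzpos : ∀ t ∈ Set.Icc (0:ℝ) 1, ∀ j, 0 < z t j := by
    intro t ht j
    rcases lt_or_ge t 1 with h1 | h1
    · have h2 := mul_pos (sub_pos.2 h1) (hy j)
      have h3 := mul_nonneg ht.1 (hx j).le
      simp only [hz]; linarith
    · have ht1 : t = 1 := le_antisymm ht.2 h1
      simp only [hz, ht1]
      simpa using hx j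
  have hzmono : ∀ t ∈ Set.Icc (0:ℝ) 1, StrictMono (z t) := by
    intro t ht j k hjk
    rcases lt_or_ge t 1 with h1 | h1
    · have h2 : (1-t) * y j < (1-t) * y k := mul_lt_mul_of_pos_left (hym hjk) (sub_pos.2 h1)
      have h3 : t * x j ≤ t * x k := mul_le_mul_of_nonneg_left (hxm hjk).le ht.1
      simp only [hz]; linarith
    · have ht1 : t = 1 := le_antisymm ht.2 h1
      simp only [hz, ht1]
      simpa using hxm hjk
  set F : ℝ → ℝ := fun t => (Matrix.of fun i j : Fin m => 1 / (x i + z t j)).det with hF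
  have hne : ∀ t ∈ Set.Icc (0:ℝ) 1, F t ≠ 0 := fun t ht =>
    cauchyDet_ne_zero x (z t) (fun i j => (add_pos (hx i) (hzpos t ht j)).ne')
      hxm.injective (hzmono t ht).injective
  have hcont : ContinuousOn F (Set.Icc 0 1) := by
    refine Continuous.comp_continuousOn (continuous_id.matrix_det) ?_
    refine continuousOn_pi.2 fun i => continuousOn_pi.2 fun j => ?_
    refine ContinuousOn.div continuousOn_const ?_ (fun t ht => (add_pos (hx i) (hzpos t ht j)).ne')
    exact (continuous_const.add (((continuous_const.sub continuous_id).mul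
      continuous_const).add (continuous_id.mul continuous_const))).continuousOn
  have hz1 : z 1 = x := by
    funext j
    simp [hz]
  have hF1 : 0 < F 1 := by
    have hdetnn : 0 ≤ F 1 := by
      have hpsd := cauchy_symm_posSemidef x hx
      have h5 : F 1 = (Matrix.of fun i j : Fin m => 1 / (x i + x j)).det := by
        show (Matrix.of fun i j : Fin m => 1 / (x i + z 1 j)).det = _
        congr 1
        ext i j
        simp only [Matrix.of_apply]
        rw [congrFun hz1 j]
      rw [h5, hpsd.1.det_eq_prod_eigenvalues]
      exact Finset.prod_nonneg fun i _ => hpsd.eigenvalues_nonneg i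
    exact lt_of_le_of_ne hdetnn (Ne.symm (hne 1 (Set.mem_Icc.2 ⟨zero_le_one, le_refl 1⟩)))
  have hz0 : z 0 = y := by
    funext j
    simp [hz]
  have hF0 : 0 < F 0 := by
    rcases lt_or_gt_of_ne (hne 0 (Set.mem_Icc.2 ⟨le_refl 0, zero_le_one⟩)) with hlt | hgt
    · exfalso
      have hsub := intermediate_value_Icc (zero_le_one (α := ℝ)) hcont
      have h0mem : (0:ℝ) ∈ Set.Icc (F 0) (F 1) := Set.mem_Icc.2 ⟨hlt.le, hF1.le⟩
      obtain ⟨t, ht, hFt⟩ := hsub h0mem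
      exact hne t ht hFt
    · exact hgt
  have h6 : F 0 = (Matrix.of fun i j : Fin m => 1 / (x i + y j)).det := by
    show (Matrix.of fun i j : Fin m => 1 / (x i + z 0 j)).det = _
    congr 1
    ext i j
    simp only [Matrix.of_apply]
    rw [congrFun hz0 j]
  rw [← h6]
  exact hF0

/-- The Cauchy matrix with entries `1/(λᵢ + λⱼ)`. -/
noncomputable def cauchyPsi (n : ℕ) (lam : Fin n → ℝ) : Matrix (Fin n) (Fin n) ℝ :=
  Matrix.of fun i j => 1 / (lam i + lam j)

section assembly

variable {n : ℕ} (lam : Fin n → ℝ)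

lemma psi_herm : (cauchyPsi n lam).IsHermitian := by
  ext i j
  simp only [cauchyPsi, Matrix.conjTranspose_apply, Matrix.of_apply, star_trivial]
  rw [add_comm]

lemma psi_entry_pos (hpos : ∀ i, 0 < lam i) (i j : Fin n) : 0 < cauchyPsi n lam i j :=
  div_pos one_pos (add_pos (hpos i) (hpos j))

lemma psi_det_pos (hpos : ∀ i, 0 < lam i) (hmono : StrictMono lam) :
    0 < (cauchyPsi n lam).det :=
  cauchyDet_pos lam lam hpos hpos hmono hmono

lemma psi_spectrum_pos (hpos : ∀ i, 0 < lam i) (hmono : StrictMono lam)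
    {μ : ℝ} (hμ : μ ∈ spectrum ℝ (cauchyPsi n lam)) : 0 < μ := by
  obtain ⟨v, hv0, hv⟩ := (mem_spectrum_iff_eig _ μ).1 hμ
  have hvv : 0 < v ⬝ᵥ v := by
    rcases lt_or_eq_of_le (Finset.sum_nonneg fun i _ => mul_self_nonneg (v i)) with h | h
    · exact h
    · exfalso
      apply hv0
      funext i
      have := (Finset.sum_eq_zero_iff_of_nonneg fun i _ => mul_self_nonneg (v i)).1 h.symm
        i (Finset.mem_univ i)
      exact mul_self_eq_zero.1 this
  have hq : 0 ≤ v ⬝ᵥ ((cauchyPsi n lam) *ᵥ v) := by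
    have h0 := cauchy_quadform_nonneg lam hpos v
    have h1 : v ⬝ᵥ ((cauchyPsi n lam) *ᵥ v) = ∑ i, ∑ j, v i * v j * (1 / (lam i + lam j)) := by
      simp only [dotProduct, Matrix.mulVec, cauchyPsi, Matrix.of_apply, Finset.mul_sum]
      exact Finset.sum_congr rfl fun i _ => Finset.sum_congr rfl fun j _ => by ring
    rw [h1]; exact h0
  have hq' : v ⬝ᵥ ((cauchyPsi n lam) *ᵥ v) = μ * (v ⬝ᵥ v) := by
    rw [hv, dotProduct_smul, smul_eq_mul]
  have hμ0 : 0 ≤ μ := by nlinarith [hq, hq', hvv]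
  rcases hμ0.lt_or_eq with h | h
  · exact h
  · exfalso
    have hv' : (cauchyPsi n lam) *ᵥ v = 0 := by rw [hv, ← h, zero_smul]
    have := Matrix.exists_mulVec_eq_zero_iff.1 ⟨v, hv0, hv'⟩
    exact (psi_det_pos lam hpos hmono).ne' this

end assembly

/-- The largest eigenvalue of `Ψ` is simple with an eigenvector of constant sign, and
the smallest eigenvalue of `Ψ` is simple with an eigenvector of alternating signs. -/
theorem Psi_extreme_eigenvectors (n : ℕ) (hn : 0 < n) (lam : Fin n → ℝ)
    (hpos : ∀ i, 0 < lam i) (hmono : StrictMono lam) :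
    ((∃ v : Fin n → ℝ, v ≠ 0 ∧
        (cauchyPsi n lam).mulVec v = sSup (spectrum ℝ (cauchyPsi n lam)) • v) ∧
      ∀ v : Fin n → ℝ, v ≠ 0 →
        (cauchyPsi n lam).mulVec v = sSup (spectrum ℝ (cauchyPsi n lam)) • v →
          ((∀ i, 0 < v i) ∨ (∀ i, v i < 0)) ∧
          ∀ w : Fin n → ℝ,
            (cauchyPsi n lam).mulVec w = sSup (spectrum ℝ (cauchyPsi n lam)) • w →
              ∃ c : ℝ, w = c • v) ∧
    ((∃ v : Fin n → ℝ, v ≠ 0 ∧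
        (cauchyPsi n lam).mulVec v = sInf (spectrum ℝ (cauchyPsi n lam)) • v) ∧
      ∀ v : Fin n → ℝ, v ≠ 0 →
        (cauchyPsi n lam).mulVec v = sInf (spectrum ℝ (cauchyPsi n lam)) • v →
          ((∀ i : Fin n, 0 < (-1 : ℝ) ^ (i : ℕ) * v i) ∨
            (∀ i : Fin n, (-1 : ℝ) ^ (i : ℕ) * v i < 0)) ∧
          ∀ w : Fin n → ℝ,
            (cauchyPsi n lam).mulVec w = sInf (spectrum ℝ (cauchyPsi n lam)) • w →
              ∃ c : ℝ, w = c • v) := by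
  classical
  obtain ⟨m, rfl⟩ : ∃ m, n = m + 1 := ⟨n - 1, (Nat.succ_pred_eq_of_pos hn).symm⟩
  set Ψ := cauchyPsi (m+1) lam with hΨ
  have hherm := psi_herm lam
  have hpospsi := psi_entry_pos lam hpos
  have hdet := psi_det_pos lam hpos hmono
  refine ⟨perron hn Ψ hherm hpospsi, ?_⟩
  -- minimum eigenvalue part
  set D : Matrix (Fin (m+1)) (Fin (m+1)) ℝ := Matrix.diagonal (fun i => (-1:ℝ)^(i:ℕ)) with hD
  have hDD : D * D = 1 := by
    rw [hD, Matrix.diagonal_mul_diagonal]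
    have h1 : (fun i : Fin (m+1) => (-1:ℝ)^(i:ℕ) * (-1)^(i:ℕ)) = fun _ => 1 := by
      funext i
      rw [← pow_add]
      exact Even.neg_one_pow ⟨i, by ring⟩
    rw [h1, Matrix.diagonal_one]
  have hDD' : ∀ v : Fin (m+1) → ℝ, D *ᵥ (D *ᵥ v) = v := by
    intro v; rw [Matrix.mulVec_mulVec, hDD, Matrix.one_mulVec]
  have hDv : ∀ (v : Fin (m+1) → ℝ), D *ᵥ v = fun i : Fin (m+1) => (-1:ℝ)^(i:ℕ) * v i := by
    intro v; funext i; rw [hD, Matrix.mulVec_diagonal]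
  have hD0 : ∀ v : Fin (m+1) → ℝ, v ≠ 0 → D *ᵥ v ≠ 0 := by
    intro v hv h
    exact hv (by rw [← hDD' v, h, Matrix.mulVec_zero])
  have hdet' : IsUnit Ψ.det := isUnit_iff_ne_zero.2 hdet.ne'
  set B := Ψ⁻¹ with hB
  have hΨB : Ψ * B = 1 := Matrix.mul_nonsing_inv Ψ hdet'
  have hBΨ : B * Ψ = 1 := Matrix.nonsing_inv_mul Ψ hdet'
  have hcorr1 : ∀ (v : Fin (m+1) → ℝ) (μ : ℝ), μ ≠ 0 →
      (Ψ *ᵥ v = μ • v ↔ B *ᵥ v = μ⁻¹ • v) := by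
    intro v μ hμ
    constructor
    · intro h
      have h1 : B *ᵥ (Ψ *ᵥ v) = v := by rw [Matrix.mulVec_mulVec, hBΨ, Matrix.one_mulVec]
      rw [h, Matrix.mulVec_smul] at h1
      rw [eq_comm, inv_smul_eq_iff₀ hμ]
      exact h1.symm
    · intro h
      have h1 : Ψ *ᵥ (B *ᵥ v) = v := by rw [Matrix.mulVec_mulVec, hΨB, Matrix.one_mulVec]
      rw [h, Matrix.mulVec_smul, inv_smul_eq_iff₀ hμ] at h1
      exact h1
  set M := D * B * D with hM
  have hMD : ∀ v : Fin (m+1) → ℝ, M *ᵥ (D *ᵥ v) = D *ᵥ (B *ᵥ v) := by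
    intro v
    rw [Matrix.mulVec_mulVec, hM, Matrix.mul_assoc (D * B) D D, hDD, mul_one,
      ← Matrix.mulVec_mulVec]
  have hcorr2 : ∀ (v : Fin (m+1) → ℝ) (ν : ℝ),
      (B *ᵥ v = ν • v ↔ M *ᵥ (D *ᵥ v) = ν • (D *ᵥ v)) := by
    intro v ν
    rw [hMD]
    constructor
    · intro h; rw [h, Matrix.mulVec_smul]
    · intro h
      have h2 := congrArg (fun w => D *ᵥ w) h
      rw [hDD', Matrix.mulVec_smul, hDD'] at h2
      exact h2
  have hΨT : Ψᵀ = Ψ := by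
    ext i j
    simp only [Matrix.transpose_apply, hΨ, cauchyPsi, Matrix.of_apply]
    rw [add_comm]
  have hBsym : ∀ i j, B i j = B j i := by
    have h1 : Bᵀ = B := by rw [hB, Matrix.transpose_nonsing_inv, hΨT]
    intro i j
    conv_lhs => rw [← h1, Matrix.transpose_apply]
  have hMentry : ∀ i j, M i j = (-1:ℝ)^(i:ℕ) * B i j * (-1)^(j:ℕ) := by
    intro i j
    rw [hM, Matrix.mul_diagonal, Matrix.diagonal_mul]
  have hBentry : ∀ i j : Fin (m+1), B i j
      = Ψ.det⁻¹ * ((-1:ℝ)^((j:ℕ)+(i:ℕ)) * (Ψ.submatrix j.succAbove i.succAbove).det) := by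
    intro i j
    rw [hB, Matrix.inv_def, Ring.inverse_eq_inv, Matrix.smul_apply, smul_eq_mul]
    congr 1
    exact Matrix.adjugate_fin_succ_eq_det_submatrix Ψ i j
  have hminor : ∀ i j : Fin (m+1), 0 < (Ψ.submatrix j.succAbove i.succAbove).det := by
    intro i j
    have h1 : Ψ.submatrix j.succAbove i.succAbove
        = Matrix.of fun a b : Fin m => 1 / (lam (j.succAbove a) + lam (i.succAbove b)) := rfl
    rw [h1]
    exact cauchyDet_pos _ _ (fun a => hpos _) (fun b => hpos _)
      (hmono.comp (Fin.strictMono_succAbove j)) (hmono.comp (Fin.strictMono_succAbove i))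
  have hMpos : ∀ i j, 0 < M i j := by
    intro i j
    rw [hMentry i j, hBentry i j]
    have key : ∀ (a b : ℕ) (C r : ℝ), (-1:ℝ)^a * (r * ((-1)^(b+a) * C)) * (-1)^b = r * C := by
      intro a b C r
      have h1 : (-1:ℝ)^a * (-1)^(b+a) * (-1)^b = 1 := by
        rw [← pow_add, ← pow_add]
        exact Even.neg_one_pow ⟨a + b, by ring⟩
      calc (-1:ℝ)^a * (r * ((-1)^(b+a) * C)) * (-1)^b
          = ((-1:ℝ)^a * (-1)^(b+a) * (-1)^b) * (r * C) := by ring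
        _ = r * C := by rw [h1, one_mul]
    rw [key]
    exact mul_pos (inv_pos.2 hdet) (hminor i j)
  have hMherm : M.IsHermitian := by
    ext i j
    rw [Matrix.conjTranspose_apply, star_trivial, hMentry j i, hMentry i j, hBsym j i]
    ring
  obtain ⟨eig, hspec⟩ := spectrum_sub_range hherm
  have hfin : (spectrum ℝ Ψ).Finite := hspec ▸ Set.finite_range eig
  have hnemp : (spectrum ℝ Ψ).Nonempty := hspec ▸ ⟨eig ⟨0, hn⟩, ⟨⟨0, hn⟩, rfl⟩⟩
  set s := sInf (spectrum ℝ Ψ) with hs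
  have hsmem : s ∈ spectrum ℝ Ψ := hnemp.csInf_mem hfin
  have hspos : 0 < s := psi_spectrum_pos lam hpos hmono hsmem
  have hslb : ∀ μ ∈ spectrum ℝ Ψ, s ≤ μ := fun μ h => csInf_le hfin.bddBelow h
  have hMmem : ∀ ν : ℝ, ν ∈ spectrum ℝ M ↔ ∃ μ ∈ spectrum ℝ Ψ, ν = μ⁻¹ := by
    intro ν
    constructor
    · intro h
      obtain ⟨u, hu0, hu⟩ := (mem_spectrum_iff_eig M ν).1 h
      set v := D *ᵥ u with hv
      have hDvu : D *ᵥ v = u := by rw [hv, hDD']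
      have hv0 : v ≠ 0 := fun h0 => hu0 (by rw [← hDvu, h0, Matrix.mulVec_zero])
      have hBv : B *ᵥ v = ν • v := (hcorr2 v ν).2 (by rw [hDvu]; exact hu)
      have hν0 : ν ≠ 0 := by
        intro h0
        rw [h0, zero_smul] at hBv
        have h1 : Ψ *ᵥ (B *ᵥ v) = v := by rw [Matrix.mulVec_mulVec, hΨB, Matrix.one_mulVec]
        rw [hBv, Matrix.mulVec_zero] at h1
        exact hv0 h1.symm
      have hΨv : Ψ *ᵥ v = ν⁻¹ • v := by
        rw [hcorr1 v ν⁻¹ (inv_ne_zero hν0), inv_inv]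
        exact hBv
      exact ⟨ν⁻¹, (mem_spectrum_iff_eig Ψ ν⁻¹).2 ⟨v, hv0, hΨv⟩, (inv_inv ν).symm⟩
    · rintro ⟨μ, hμ, rfl⟩
      obtain ⟨v, hv0, hv⟩ := (mem_spectrum_iff_eig Ψ μ).1 hμ
      have hμpos := psi_spectrum_pos lam hpos hmono hμ
      refine (mem_spectrum_iff_eig M μ⁻¹).2 ⟨D *ᵥ v, hD0 v hv0, ?_⟩
      exact (hcorr2 v μ⁻¹).1 ((hcorr1 v μ hμpos.ne').1 hv)
  have hMsup : sSup (spectrum ℝ M) = s⁻¹ := by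
    refine IsGreatest.csSup_eq ⟨(hMmem s⁻¹).2 ⟨s, hsmem, rfl⟩, ?_⟩
    rintro ν hν
    obtain ⟨μ, hμ, rfl⟩ := (hMmem ν).1 hν
    exact inv_anti₀ hspos (hslb μ hμ)
  obtain ⟨hMex, hMuniq⟩ := perron hn M hMherm hMpos
  rw [hMsup] at hMex hMuniq
  constructor
  · obtain ⟨u, hu0, hu⟩ := hMex
    refine ⟨D *ᵥ u, hD0 u hu0, ?_⟩
    have h1 : B *ᵥ (D *ᵥ u) = s⁻¹ • (D *ᵥ u) := (hcorr2 _ _).2 (by rw [hDD']; exact hu)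
    exact (hcorr1 _ s hspos.ne').2 h1
  · intro v hv0 hv
    have hMv : M *ᵥ (D *ᵥ v) = s⁻¹ • (D *ᵥ v) :=
      (hcorr2 v s⁻¹).1 ((hcorr1 v s hspos.ne').1 hv)
    obtain ⟨hsgn, huniq⟩ := hMuniq (D *ᵥ v) (hD0 v hv0) hMv
    constructor
    · rcases hsgn with h | h
      · left
        intro i
        have h2 := h i
        simp only [hDv v] at h2
        exact h2
      · right
        intro i
        have h2 := h i
        simp only [hDv v] at h2
        exact h2
    · intro w hw
      have hMw : M *ᵥ (D *ᵥ w) = s⁻¹ • (D *ᵥ w) :=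
        (hcorr2 w s⁻¹).1 ((hcorr1 w s hspos.ne').1 hw)
      obtain ⟨c, hc⟩ := huniq (D *ᵥ w) hMw
      refine ⟨c, ?_⟩
      have h2 := congrArg (fun z => D *ᵥ z) hc
      rw [hDD', Matrix.mulVec_smul, hDD'] at h2
      exact h2
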